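/- If {w_i}_{i=1}^{d²} ⊆ ℂ^d is a set of d² unit vectors such that |⟨w_i, w_j⟩|² = c for all i ≠ j, where c ≠ 1, then c = 1/(d+1). -/

import Mathlib

/-- If `{w_i}_{i=1}^{d²} ⊆ ℂ^d` is a set of `d²` unit vectors such that
`|⟨w_i, w_j⟩|² = c` for all `i ≠ j`, where `c ≠ 1`, then `c = 1/(d+1)`. -/
theorem equiangular_constant {d : ℕ} (hd : 2 ≤ d) (c : ℝ)
    (w : Fin (d ^ 2) → EuclideanSpace ℂ (Fin d))
    (hw : ∀ i, ‖w i‖ = 1)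
    (hang : ∀ i j, i ≠ j → ‖(inner ℂ (w i) (w j) : ℂ)‖ ^ 2 = c)
    (hc : c ≠ 1) :
    c = 1 / (d + 1) := by
  classical
  set P : Fin (d ^ 2) → Matrix (Fin d) (Fin d) ℂ :=
    fun i => Matrix.of fun a b => w i a * (starRingEnd ℂ) (w i b) with hP
  have htr : ∀ i j, (P i * P j).trace
      = (inner ℂ (w j) (w i) : ℂ) * (inner ℂ (w i) (w j) : ℂ) := by
    intro i j
    simp only [Matrix.trace, Matrix.diag, Matrix.mul_apply, hP, Matrix.of_apply,
      PiLp.inner_apply, RCLike.inner_apply]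
    rw [Finset.sum_mul_sum]
    exact Finset.sum_congr rfl fun a _ => Finset.sum_congr rfl fun b _ => by ring
  have htrc : ∀ i j, i ≠ j → (P i * P j).trace = (c : ℂ) := by
    intro i j hij
    rw [htr i j, ← inner_conj_symm (w i) (w j), Complex.mul_conj']
    rw [norm_inner_symm (w j) (w i)]
    exact_mod_cast hang i j hij
  have htr1 : ∀ i, (P i * P i).trace = 1 := by
    intro i
    rw [htr i i, inner_self_eq_norm_sq_to_K, hw i]
    norm_num
  have htrP : ∀ i, (P i).trace = 1 := by
    intro i
    have : (P i).trace = (inner ℂ (w i) (w i) : ℂ) := by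
      simp only [Matrix.trace, Matrix.diag, hP, Matrix.of_apply, PiLp.inner_apply,
        RCLike.inner_apply]
    rw [this, inner_self_eq_norm_sq_to_K, hw i]
    norm_num
  have hd2 : (1:ℂ) - (c:ℂ) ≠ 0 := by
    intro h
    apply hc
    have : (c:ℂ) = 1 := by linear_combination -h
    exact_mod_cast this
  have hdep : ¬ LinearIndependent ℂ
      (Fin.snoc P (1 : Matrix (Fin d) (Fin d) ℂ) : Fin (d ^ 2 + 1) → _) := by
    intro h
    have h1 := h.fintype_card_le_finrank
    rw [Module.finrank_matrix] at h1
    simp [Fintype.card_fin] at h1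
    nlinarith [h1]
  rw [Fintype.not_linearIndependent_iff] at hdep
  obtain ⟨g, hg, i0, hi0⟩ := hdep
  set μ := g (Fin.last (d ^ 2)) with hμ
  set lam : Fin (d ^ 2) → ℂ := fun i => g i.castSucc with hlam
  set Λ := ∑ i, lam i with hΛ
  rw [Fin.sum_univ_castSucc] at hg
  simp only [Fin.snoc_castSucc, Fin.snoc_last] at hg
  -- hg : ∑ i, g i.castSucc • P i + μ • 1 = 0
  have EqA : ∀ j, lam j * (1 - (c:ℂ)) + (c:ℂ) * Λ + μ = 0 := by
    intro j
    have h0 : (((∑ i, g i.castSucc • P i) + μ • (1:Matrix (Fin d) (Fin d) ℂ)) * P j).trace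
        = 0 := by rw [hg]; simp
    rw [Matrix.add_mul, Matrix.sum_mul] at h0
    simp only [Matrix.smul_mul, Matrix.one_mul, Matrix.trace_add, Matrix.trace_sum,
      Matrix.trace_smul, smul_eq_mul] at h0
    rw [htrP j, mul_one] at h0
    rw [← Finset.add_sum_erase _ _ (Finset.mem_univ j), htr1 j] at h0
    have hrest : ∑ i ∈ Finset.univ.erase j, g i.castSucc * (P i * P j).trace
        = (c:ℂ) * (Λ - lam j) := by
      rw [Finset.sum_congr rfl (fun i hi => by
        rw [htrc i j (Finset.ne_of_mem_erase hi)])]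
      rw [← Finset.sum_mul, Finset.sum_erase_eq_sub (Finset.mem_univ j)]
      rw [hΛ, hlam]
      ring
    rw [hrest] at h0
    rw [hlam]
    linear_combination h0
  have EqB : Λ + μ * d = 0 := by
    have h0 : ((∑ i, g i.castSucc • P i) + μ • (1:Matrix (Fin d) (Fin d) ℂ)).trace = 0 := by
      rw [hg]; simp
    simp only [Matrix.trace_add, Matrix.trace_sum, Matrix.trace_smul, smul_eq_mul,
      Matrix.trace_one, Fintype.card_fin, htrP, mul_one] at h0
    rw [hΛ, hlam]
    linear_combination h0
  have hn : 0 < d ^ 2 := by positivity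
  set j0 : Fin (d ^ 2) := ⟨0, hn⟩ with hj0
  set a := lam j0 with ha
  have hconst : ∀ j, lam j = a := by
    intro j
    have h1 := EqA j
    have h2 := EqA j0
    have h3 : (lam j - a) * (1 - (c:ℂ)) = 0 := by linear_combination h1 - h2
    rcases mul_eq_zero.1 h3 with h | h
    · linear_combination h
    · exact absurd h hd2
  have hΛa : Λ = (d:ℂ) ^ 2 * a := by
    rw [hΛ, Finset.sum_congr rfl fun j _ => hconst j, Finset.sum_const,
      Finset.card_univ, Fintype.card_fin]
    simp [nsmul_eq_mul]
  have hdc : (d:ℂ) ≠ 0 := Nat.cast_ne_zero.2 (by omega)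
  have hane : a ≠ 0 := by
    intro h0
    have hμ0 : μ = 0 := by
      have h2 := EqB
      rw [hΛa, h0, mul_zero, zero_add] at h2
      exact (mul_eq_zero.1 h2).resolve_right hdc
    apply hi0
    induction i0 using Fin.lastCases with
    | last => exact hμ0
    | cast i => rw [show g i.castSucc = lam i from rfl, hconst i, h0]
  have key : (1:ℂ) - c + c * (d:ℂ)^2 - d = 0 := by
    have h1 := EqA j0
    have h2 := EqB
    rw [hΛa] at h1 h2
    have h3 : (d:ℂ) * a * ((1:ℂ) - c + c * (d:ℂ)^2 - d) = 0 := by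
      linear_combination (d:ℂ) * h1 - h2
    rcases mul_eq_zero.1 h3 with h | h
    · rcases mul_eq_zero.1 h with h' | h'
      · exact absurd h' hdc
      · exact absurd h' hane
    · exact h
  have keyR : (1:ℝ) - c + c * (d:ℝ)^2 - d = 0 := by exact_mod_cast key
  have hdR : (2:ℝ) ≤ d := by exact_mod_cast hd
  have hne : (d:ℝ) - 1 ≠ 0 := by linarith
  have h4 : ((d:ℝ) - 1) * (c * ((d:ℝ) + 1) - 1) = 0 := by linear_combination keyR
  have h5 : c * ((d:ℝ) + 1) - 1 = 0 := (mul_eq_zero.1 h4).resolve_left hne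
  have h6 : (d:ℝ) + 1 ≠ 0 := by positivity
  rw [eq_div_iff h6]
  linarith
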